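/- Let x ∈ E and let H : E →L[ℝ] E be a self-adjoint continuous linear operator with ‖H − ∇²f(x)‖ ≤ r̲. Suppose ‖∇f(x)‖ ≤ φ and let z ∈ E satisfy H z = −∇f(x) (a pure Newton step with unit stepsize). Then ‖∇f(x + z)‖ ≤ (r̲/(μ − r̲))·‖∇f(x)‖ + (L/(2(μ − r̲)²))·‖∇f(x)‖², and consequently ‖∇f(x + z)‖ ≤ (μ/(M + μ))·‖∇f(x)‖ ≤ (1/2)·‖∇f(x)‖. -/

import Mathlib

set_option maxHeartbeats 2000000 in
theorem danla_pure_step_contraction (p : ℕ) (hp : 1 ≤ p)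
    (f : EuclideanSpace ℝ (Fin p) → ℝ) (hf : ContDiff ℝ 2 f)
    (μ L M : ℝ) (hμ : 0 < μ) (hL : 0 < L) (hμM : μ ≤ M)
    (hstrong : ∀ x v : EuclideanSpace ℝ (Fin p),
      μ * ‖v‖ ^ 2 ≤ inner ℝ (fderiv ℝ (gradient f) x v) v)
    (hlip : ∀ x y : EuclideanSpace ℝ (Fin p),
      ‖fderiv ℝ (gradient f) x - fderiv ℝ (gradient f) y‖ ≤ L * ‖x - y‖)
    (hbound : ∀ x : EuclideanSpace ℝ (Fin p), ‖fderiv ℝ (gradient f) x‖ ≤ M)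
    (c : ℝ) (hc : 0 < c)
    (Mc r φ : ℝ) (hMc : Mc = M + c)
    (hr : r = (Real.sqrt (Mc ^ 2 + 3 * μ ^ 2) - Mc) / 3)
    (hφ : φ = 2 * μ * (μ - r) ^ 2 / (L * (M + μ)) - 2 * r * (μ - r) / L)
    (x z : EuclideanSpace ℝ (Fin p))
    (H : EuclideanSpace ℝ (Fin p) →L[ℝ] EuclideanSpace ℝ (Fin p))
    (hHsa : ∀ v w : EuclideanSpace ℝ (Fin p), (inner ℝ (H v) w : ℝ) = inner ℝ v (H w))
    (hHerr : ‖H - fderiv ℝ (gradient f) x‖ ≤ r)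
    (hg : ‖gradient f x‖ ≤ φ)
    (hz : H z = -gradient f x) :
    ‖gradient f (x + z)‖ ≤
      r / (μ - r) * ‖gradient f x‖ + L / (2 * (μ - r) ^ 2) * ‖gradient f x‖ ^ 2 ∧
    ‖gradient f (x + z)‖ ≤ μ / (M + μ) * ‖gradient f x‖ ∧
    ‖gradient f (x + z)‖ ≤ 1 / 2 * ‖gradient f x‖ := by
  -- abbreviations
  set Dg := fun y : EuclideanSpace ℝ (Fin p) => fderiv ℝ (gradient f) y with hDgdef
  set G := ‖gradient f x‖ with hGdef
  have hG0 : 0 ≤ G := norm_nonneg _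
  -- basic numeric facts about r
  have hMc0 : 0 < Mc := by rw [hMc]; linarith
  have hr0 : 0 < r := by
    rw [hr]
    have : Mc < Real.sqrt (Mc ^ 2 + 3 * μ ^ 2) :=
      (Real.lt_sqrt hMc0.le).mpr (by nlinarith)
    linarith
  have hrμ : r < μ := by
    have hs : Real.sqrt (Mc ^ 2 + 3 * μ ^ 2) < Mc + 3 * μ :=
      (Real.sqrt_lt' (by linarith)).mpr (by nlinarith)
    rw [hr]; linarith
  have hμr : 0 < μ - r := by linarith
  have hMμ : 0 < M + μ := by linarith
  -- the gradient is C¹, hence differentiable with derivative Dg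
  have hg1 : ContDiff ℝ 1 (gradient f) := by
    have h2 : ContDiff ℝ 1 (fderiv ℝ f) := hf.fderiv_right (by norm_num)
    have hgr : gradient f = fun y =>
        (InnerProductSpace.toDual ℝ (EuclideanSpace ℝ (Fin p))).symm (fderiv ℝ f y) := rfl
    rw [hgr]
    exact (InnerProductSpace.toDual ℝ (EuclideanSpace ℝ (Fin p))).symm.contDiff.comp h2
  have hdiff : ∀ y : EuclideanSpace ℝ (Fin p), HasFDerivAt (gradient f) (Dg y) y := fun y =>
    (hg1.differentiable one_ne_zero y).hasFDerivAt
  -- Dg is continuous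
  have hDgcont : Continuous Dg := by
    have : LipschitzWith L.toNNReal Dg := LipschitzWith.of_dist_le_mul fun a b => by
      simp only [dist_eq_norm, Real.coe_toNNReal L hL.le]
      exact hlip a b
    exact this.continuous
  -- bound on ‖z‖
  have hzn : ‖z‖ ≤ G / (μ - r) := by
    have h1 : μ * ‖z‖ ^ 2 ≤ inner ℝ (Dg x z) z := hstrong x z
    have h2 : |(inner ℝ ((H - Dg x) z) z : ℝ)| ≤ r * ‖z‖ ^ 2 := by
      refine le_trans (abs_real_inner_le_norm _ _) ?_
      have := (H - Dg x).le_opNorm z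
      have h3 : ‖(H - Dg x) z‖ ≤ r * ‖z‖ := le_trans this (by
        have := hHerr; nlinarith [norm_nonneg z])
      nlinarith [norm_nonneg z]
    have h4 : (inner ℝ (H z) z : ℝ) ≤ G * ‖z‖ := by
      rw [hz]
      refine le_trans (real_inner_le_norm _ _) ?_
      simp [hGdef]
    have h5 : (inner ℝ (H z) z : ℝ) = inner ℝ (Dg x z) z + inner ℝ ((H - Dg x) z) z := by
      rw [← inner_add_left]
      congr 1
      simp [ContinuousLinearMap.sub_apply]
    rw [h5] at h4
    have h2' := abs_le.mp h2
    have h6 : (μ - r) * ‖z‖ ^ 2 ≤ G * ‖z‖ := by nlinarith [h1, h2'.1, h2'.2, h4]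
    rcases (norm_nonneg z).eq_or_lt with h | h
    · rw [← h]; positivity
    · rw [le_div_iff₀ hμr]; nlinarith
  -- Taylor step: ‖gradient f (x+z)‖ ≤ r‖z‖ + L/2 ‖z‖²
  set ψ : ℝ → EuclideanSpace ℝ (Fin p) := fun t => gradient f (x + t • z) - t • (Dg x z) with hψdef
  set ψ' : ℝ → EuclideanSpace ℝ (Fin p) := fun t => Dg (x + t • z) z - Dg x z with hψ'def
  have hψ : ∀ t : ℝ, HasDerivAt ψ (ψ' t) t := by
    intro t
    have h1 : HasDerivAt (fun s : ℝ => x + s • z) z t := by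
      simpa using ((hasDerivAt_id t).smul_const z).const_add x
    have h2 : HasDerivAt (fun s : ℝ => gradient f (x + s • z)) (Dg (x + t • z) z) t :=
      (hdiff (x + t • z)).comp_hasDerivAt (f := fun s : ℝ => x + s • z) t h1
    have h3 : HasDerivAt (fun s : ℝ => s • (Dg x z)) (Dg x z) t := by
      simpa using (hasDerivAt_id t).smul_const (Dg x z)
    exact h2.sub h3
  have hψ'cont : Continuous ψ' := by
    have h1 : Continuous fun t : ℝ => x + t • z :=
      continuous_const.add (continuous_id.smul continuous_const)
    exact ((hDgcont.comp h1).clm_apply continuous_const).sub continuous_const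
  have hFTC : ∫ t in (0:ℝ)..1, ψ' t = ψ 1 - ψ 0 :=
    intervalIntegral.integral_eq_sub_of_hasDerivAt (fun t _ => hψ t)
      (hψ'cont.intervalIntegrable 0 1)
  have hdecomp : gradient f (x + z) = (∫ t in (0:ℝ)..1, ψ' t) + (Dg x - H) z := by
    rw [hFTC]
    have hψ1 : ψ 1 = gradient f (x + z) - Dg x z := by simp [hψdef]
    have hψ0 : ψ 0 = gradient f x := by simp [hψdef]
    rw [hψ1, hψ0]
    have : (Dg x - H) z = Dg x z - H z := rfl
    rw [this, hz]
    abel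
  have hIbound : ‖∫ t in (0:ℝ)..1, ψ' t‖ ≤ L / 2 * ‖z‖ ^ 2 := by
    have hb : ∀ t ∈ Set.uIoc (0:ℝ) 1, ‖ψ' t‖ ≤ L * ‖z‖ ^ 2 * t := by
      intro t ht
      rw [Set.uIoc_of_le (by norm_num : (0:ℝ) ≤ 1)] at ht
      have ht0 : 0 < t := ht.1
      have h1 : ψ' t = (Dg (x + t • z) - Dg x) z := by
        simp [hψ'def, ContinuousLinearMap.sub_apply]
      rw [h1]
      refine le_trans ((Dg (x + t • z) - Dg x).le_opNorm z) ?_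
      have heq : x + t • z - x = t • z := by abel
      have h2 : ‖Dg (x + t • z) - Dg x‖ ≤ L * (t * ‖z‖) := by
        have h3 := hlip (x + t • z) x
        rw [heq, norm_smul, Real.norm_eq_abs, abs_of_pos ht0] at h3
        exact h3
      nlinarith [norm_nonneg z]
    have hint : IntervalIntegrable (fun t => L * ‖z‖ ^ 2 * t) MeasureTheory.volume 0 1 :=
      (continuous_const.mul continuous_id).intervalIntegrable 0 1
    have := intervalIntegral.norm_integral_le_of_norm_le
      (f := ψ') (μ := MeasureTheory.volume) (a := 0) (b := 1)
      (by norm_num) (Filter.Eventually.of_forall fun t ht =>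
        hb t (by rwa [Set.uIoc_of_le (by norm_num : (0:ℝ) ≤ 1)])) hint
    refine le_trans this ?_
    have hcalc : (∫ t in (0:ℝ)..1, L * ‖z‖ ^ 2 * t) = L / 2 * ‖z‖ ^ 2 := by
      rw [intervalIntegral.integral_const_mul, integral_id]
      ring
    rw [hcalc]
  have hmain : ‖gradient f (x + z)‖ ≤ r * ‖z‖ + L / 2 * ‖z‖ ^ 2 := by
    rw [hdecomp]
    refine le_trans (norm_add_le _ _) ?_
    have h1 : ‖(Dg x - H) z‖ ≤ r * ‖z‖ := by
      refine le_trans ((Dg x - H).le_opNorm z) ?_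
      have h2 : ‖Dg x - H‖ = ‖H - Dg x‖ := norm_sub_rev _ _
      have := norm_nonneg z
      nlinarith
    linarith
  -- first inequality
  have first : ‖gradient f (x + z)‖ ≤
      r / (μ - r) * G + L / (2 * (μ - r) ^ 2) * G ^ 2 := by
    refine le_trans hmain ?_
    have hzn2 : ‖z‖ ^ 2 ≤ (G / (μ - r)) ^ 2 := by
      have := norm_nonneg z
      nlinarith
    have h1 : r * ‖z‖ ≤ r / (μ - r) * G := by
      calc r * ‖z‖ ≤ r * (G / (μ - r)) := mul_le_mul_of_nonneg_left hzn hr0.le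
        _ = r / (μ - r) * G := by ring
    have h2 : L / 2 * ‖z‖ ^ 2 ≤ L / (2 * (μ - r) ^ 2) * G ^ 2 := by
      have hne : μ - r ≠ 0 := ne_of_gt hμr
      have heq : L / (2 * (μ - r) ^ 2) * G ^ 2 = L / 2 * (G / (μ - r)) ^ 2 := by
        field_simp
      rw [heq]
      nlinarith
    linarith
  have hkey : L / (2 * (μ - r) ^ 2) * φ = μ / (M + μ) - r / (μ - r) := by
    rw [hφ]
    have h1 : L ≠ 0 := ne_of_gt hL
    have h2 : (M + μ) ≠ 0 := ne_of_gt hMμ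
    have h3 : μ - r ≠ 0 := ne_of_gt hμr
    field_simp
  have second : ‖gradient f (x + z)‖ ≤ μ / (M + μ) * G := by
    have hc0 : 0 ≤ L / (2 * (μ - r) ^ 2) := by positivity
    have hGG : G ^ 2 ≤ φ * G := by nlinarith
    have h2 : L / (2 * (μ - r) ^ 2) * G ^ 2 ≤ (μ / (M + μ) - r / (μ - r)) * G := by
      rw [← hkey]
      calc L / (2 * (μ - r) ^ 2) * G ^ 2 ≤ L / (2 * (μ - r) ^ 2) * (φ * G) :=
            mul_le_mul_of_nonneg_left hGG hc0
        _ = L / (2 * (μ - r) ^ 2) * φ * G := by ring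
    linarith [first, h2]
  have h3 : μ / (M + μ) ≤ 1 / 2 := by
    rw [div_le_div_iff₀ hMμ (by norm_num)]
    linarith
  exact ⟨first, second, le_trans second (mul_le_mul_of_nonneg_right h3 hG0)⟩
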